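/- Let A be a symmetric positive definite m×m real matrix with smallest eigenvalue at least λ > 0 and largest eigenvalue at most λ + c for some c ≥ 0, and let 𝟏 ∈ ℝᵐ be the all-ones vector. Then the vector α̃ = A⁻¹𝟏 / (𝟏ᵀA⁻¹𝟏) satisfies ‖α̃‖₂² ≤ (λ + c)/(m·λ). -/

import Mathlib

open Matrix

/-- Abstract form of the first bound of Proposition 1: if the symmetric positive definite
matrix `A` has spectrum contained in `[λ, λ + c]`, then
`α̃ = A⁻¹𝟏/(𝟏ᵀA⁻¹𝟏)` satisfies `‖α̃‖² ≤ (λ + c)/(mλ)`. -/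
theorem raa_coefficient_norm_bound_abstract
    {m : ℕ} (hm : 0 < m) (A : Matrix (Fin m) (Fin m) ℝ) (hA : A.PosDef)
    (lam c : ℝ) (hlam : 0 < lam) (hc : 0 ≤ c)
    (hlow : ∀ v : Fin m → ℝ, lam * (v ⬝ᵥ v) ≤ v ⬝ᵥ A.mulVec v)
    (hhigh : ∀ v : Fin m → ℝ, v ⬝ᵥ A.mulVec v ≤ (lam + c) * (v ⬝ᵥ v))
    (α : Fin m → ℝ)
    (hα : α = (1 / ((1 : Fin m → ℝ) ⬝ᵥ A⁻¹.mulVec 1)) • A⁻¹.mulVec 1) :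
    ∑ i, α i ^ 2 ≤ (lam + c) / (m * lam) := by
  set u : Fin m → ℝ := A⁻¹.mulVec 1 with hu
  set s : ℝ := (1 : Fin m → ℝ) ⬝ᵥ u with hs
  -- A * A⁻¹ = 1
  have hinv : A * A⁻¹ = 1 := mul_nonsing_inv A (isUnit_iff_isUnit_det A |>.1 hA.isUnit)
  have hAu : A.mulVec u = 1 := by
    rw [hu, mulVec_mulVec, hinv, one_mulVec]
  -- symmetry
  have hAt : Aᵀ = A := hA.1
  have hsym : ∀ x y : Fin m → ℝ, x ⬝ᵥ A.mulVec y = y ⬝ᵥ A.mulVec x := by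
    intro x y
    rw [dotProduct_mulVec, ← mulVec_transpose, hAt, dotProduct_comm]
  have hone : (1 : Fin m → ℝ) ⬝ᵥ (1 : Fin m → ℝ) = (m : ℝ) := by
    simp [dotProduct]
  -- u ≠ 0
  have hune : u ≠ 0 := by
    intro h
    have : (1 : Fin m → ℝ) = 0 := by rw [← hAu, h, mulVec_zero]
    have := congrFun this ⟨0, hm⟩
    norm_num at this
  have huu_pos : 0 < u ⬝ᵥ u := by
    have h0 : 0 ≤ u ⬝ᵥ u := by
      refine Finset.sum_nonneg fun i _ => mul_self_nonneg _
    rcases h0.lt_or_eq with h | h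
    · exact h
    · exact absurd (dotProduct_self_eq_zero.mp h.symm) hune
  have huAu : u ⬝ᵥ A.mulVec u = s := by rw [hAu, hs, dotProduct_comm]
  have hs_pos : 0 < s := by
    have := hlow u
    rw [huAu] at this
    exact lt_of_lt_of_le (mul_pos hlam huu_pos) this
  have huu_le : lam * (u ⬝ᵥ u) ≤ s := by
    have := hlow u
    rwa [huAu] at this
  -- lower bound on s: s ≥ m/(lam+c), via nonnegativity of the quadratic form at 1 - (m/s)•u
  have hB1u : (1 : Fin m → ℝ) ⬝ᵥ A.mulVec u = (m : ℝ) := by rw [hAu, hone]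
  have hBu1 : u ⬝ᵥ A.mulVec 1 = (m : ℝ) := by rw [hsym u 1, hB1u]
  have hB11 : (1 : Fin m → ℝ) ⬝ᵥ A.mulVec 1 ≤ (lam + c) * m := by
    have := hhigh 1
    rwa [hone] at this
  have hms : (m : ℝ) ≤ (lam + c) * s := by
    set w : Fin m → ℝ := 1 - ((m : ℝ) / s) • u with hw
    have hw0 : 0 ≤ w ⬝ᵥ A.mulVec w := by
      have h1 := hlow w
      have h2 : 0 ≤ w ⬝ᵥ w := by
        unfold dotProduct
        exact Finset.sum_nonneg fun i _ => mul_self_nonneg _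
      nlinarith
    have hexp : w ⬝ᵥ A.mulVec w
        = (1 : Fin m → ℝ) ⬝ᵥ A.mulVec 1 - ((m : ℝ)/s) * (m : ℝ)
          - ((m : ℝ)/s) * (m : ℝ) + ((m : ℝ)/s) * (((m : ℝ)/s) * s) := by
      rw [hw, mulVec_sub, mulVec_smul, sub_dotProduct, dotProduct_sub, dotProduct_sub,
        smul_dotProduct, dotProduct_smul, dotProduct_smul, smul_dotProduct,
        hB1u, hBu1, huAu]
      push_cast
      ring_nf
    rw [hexp] at hw0
    have hmm : ((m : ℝ)/s) * s = (m : ℝ) := div_mul_cancel₀ _ hs_pos.ne'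
    rw [hmm] at hw0
    have hB11' : (m : ℝ) * (m : ℝ) / s ≤ (lam + c) * m := by
      calc (m : ℝ) * (m : ℝ) / s = ((m:ℝ)/s) * m := by ring
        _ ≤ (1 : Fin m → ℝ) ⬝ᵥ A.mulVec 1 := by linarith
        _ ≤ (lam + c) * m := hB11
    have hmpos : (0 : ℝ) < m := by exact_mod_cast hm
    rw [div_le_iff₀ hs_pos] at hB11'
    nlinarith
  -- conclude
  have hαα : ∑ i, α i ^ 2 = (u ⬝ᵥ u) / s ^ 2 := by
    rw [hα]
    simp only [Pi.smul_apply, smul_eq_mul, mul_pow, one_div]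
    rw [← Finset.mul_sum]
    have huu : u ⬝ᵥ u = ∑ i, u i ^ 2 := by simp [dotProduct, pow_two]
    rw [huu, inv_pow, div_eq_mul_inv, mul_comm]
  rw [hαα]
  have hmpos : (0 : ℝ) < m := by exact_mod_cast hm
  rw [div_le_div_iff₀ (by positivity) (by positivity)]
  -- (u⬝u) * (m*lam) ≤ (lam+c) * s^2
  nlinarith [mul_le_mul_of_nonneg_left huu_le hmpos.le,
    mul_le_mul_of_nonneg_right hms hs_pos.le]
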